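/- arXiv:1010.5742 — 3 statements merged into one kernel-verified Lean document; each statement's English description precedes it below -/
import Mathlib

section
/- Let $g : [0,T] \to \mathbb{R}$ be continuous, extended to all of $\mathbb{R}$ by $g(t) = g(T)$ for $t > T$ and $g(t) = g(0)$ for $t < 0$. Suppose there exists an integrable function $\rho \in L^1(0,T;\mathbb{R})$ and some $h_0 > 0$ such that $\frac{g(t+h) - g(t)}{h} \le \rho(t)$ for a.e. $t \in [0,T]$ and all $0 < h \le h_0$. Then for all $0 \le \alpha \le \beta \le T$, $g(\beta) - g(\alpha) \le \int_\alpha^\beta \limsup_{h \to 0^+} \frac{g(r+h) - g(r)}{h} \, dr$. -/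
open Filter MeasureTheory Set

/-- limsup of difference quotients over reals equals the limsup over rationals. -/
lemma limsup_dq_eq_rat (g : ℝ → ℝ) (hgc : Continuous g) (r : ℝ) :
    limsup (fun h : ℝ => (g (r + h) - g r) / h) (nhdsWithin 0 (Ioi 0))
      = limsup (fun q : ℚ => (g (r + (q : ℝ)) - g r) / (q : ℝ))
          (Filter.comap ((↑) : ℚ → ℝ) (nhdsWithin 0 (Ioi 0))) := by
  rw [limsup_eq, limsup_eq]
  congr 1
  ext a
  simp only [mem_setOf_eq]
  constructor
  · intro hev
    exact hev.comap ((↑) : ℚ → ℝ)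
  · intro hev
    rw [((nhdsGT_basis (0:ℝ)).comap ((↑) : ℚ → ℝ)).eventually_iff] at hev
    obtain ⟨ε, hε, hq⟩ := hev
    rw [(nhdsGT_basis (0:ℝ)).eventually_iff]
    refine ⟨ε, hε, fun h hh => ?_⟩
    by_contra hlt
    push_neg at hlt
    have hcont : ContinuousAt (fun y : ℝ => (g (r + y) - g r) / y) h := by
      apply ContinuousAt.div
      · exact ((hgc.comp (continuous_const.add continuous_id)).sub continuous_const).continuousAt
      · exact continuousAt_id
      · exact ne_of_gt hh.1
    have hev2 : ∀ᶠ y in nhds h, a < (g (r + y) - g r) / y :=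
      hcont.eventually_const_lt hlt
    obtain ⟨U, hUsub, hUopen, hUmem⟩ := eventually_nhds_iff.1 hev2
    obtain ⟨q, hqmem⟩ := Rat.denseRange_cast.exists_mem_open (hUopen.inter isOpen_Ioo)
      ⟨h, hUmem, hh⟩
    exact absurd (hq hqmem.2) (not_le.2 (hUsub _ hqmem.1))

lemma measurable_limsup_dq (g : ℝ → ℝ) (hgc : Continuous g) :
    Measurable fun r : ℝ =>
      limsup (fun h : ℝ => (g (r + h) - g r) / h) (nhdsWithin 0 (Ioi 0)) := by
  have hmeas : ∀ q : ℚ, Measurable fun r : ℝ => (g (r + (q : ℝ)) - g r) / (q : ℝ) := fun q =>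
    (((hgc.comp (continuous_id.add continuous_const)).sub hgc).div_const _).measurable
  obtain ⟨s, hs⟩ :=
    (Filter.comap ((↑) : ℚ → ℝ) (nhdsWithin (0:ℝ) (Ioi 0))).exists_antitone_basis
  have hmain := Measurable.limsup' (f := fun (q : ℚ) (r : ℝ) => (g (r + (q : ℝ)) - g r) / (q : ℝ))
    hmeas (⟨hs.toHasBasis, to_countable _⟩ :
      (Filter.comap ((↑) : ℚ → ℝ) (nhdsWithin (0:ℝ) (Ioi 0))).HasCountableBasis _ _)
    (fun i => (s i).to_countable)
  have heq : (fun r : ℝ =>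
      limsup (fun h : ℝ => (g (r + h) - g r) / h) (nhdsWithin 0 (Ioi 0)))
      = fun r : ℝ => limsup (fun q : ℚ => (g (r + (q : ℝ)) - g r) / (q : ℝ))
          (Filter.comap ((↑) : ℚ → ℝ) (nhdsWithin 0 (Ioi 0))) :=
    funext fun r => limsup_dq_eq_rat g hgc r
  rw [heq]
  exact hmain

lemma continuous_of_constant_extension (T : ℝ) (hT : 0 < T) (g : ℝ → ℝ)
    (hg : ContinuousOn g (Icc 0 T))
    (hext_top : ∀ t : ℝ, T < t → g t = g T)
    (hext_bot : ∀ t : ℝ, t < 0 → g t = g 0) : Continuous g := by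
  have heq : g = fun t => g (min (max t 0) T) := by
    funext t
    rcases lt_or_ge t 0 with h | h
    · rw [hext_bot t h, max_eq_right h.le, min_eq_left hT.le]
    · rcases le_or_gt t T with h2 | h2
      · rw [max_eq_left h, min_eq_left h2]
      · rw [hext_top t h2, max_eq_left h, min_eq_right h2.le]
  rw [heq]
  exact hg.comp_continuous ((continuous_id.max continuous_const).min continuous_const)
    fun t => ⟨le_min (le_max_right _ _) hT.le, min_le_right _ _⟩

/-- Fatou-type lemma for right difference quotients (Lemma 10 of the paper):
if `g` is continuous on `[0,T]`, extended constantly outside, and its right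
difference quotients are dominated by an integrable `ρ`, then
`g β - g α ≤ ∫_α^β limsup_{h→0+} (g(r+h)-g(r))/h dr`. -/
theorem fatou_difference_quotient
    (T : ℝ) (hT : 0 < T) (g : ℝ → ℝ)
    (hg : ContinuousOn g (Icc 0 T))
    (hext_top : ∀ t : ℝ, T < t → g t = g T)
    (hext_bot : ∀ t : ℝ, t < 0 → g t = g 0)
    (ρ : ℝ → ℝ) (hρ : IntegrableOn ρ (Icc 0 T))
    (h0 : ℝ) (hh0 : 0 < h0)
    (hdom : ∀ᵐ t ∂(volume.restrict (Icc 0 T)),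
      ∀ h : ℝ, 0 < h → h ≤ h0 → (g (t + h) - g t) / h ≤ ρ t) :
    ∀ α β : ℝ, 0 ≤ α → α ≤ β → β ≤ T →
      g β - g α ≤ ∫ r in α..β,
        Filter.limsup (fun h : ℝ => (g (r + h) - g r) / h) (nhdsWithin 0 (Ioi 0)) := by
  have hgc : Continuous g := continuous_of_constant_extension T hT g hg hext_top hext_bot
  intro α β hα hαβ hβT
  set L : ℝ → ℝ :=
    fun r => limsup (fun h : ℝ => (g (r + h) - g r) / h) (nhdsWithin 0 (Ioi 0)) with hLdef
  set D : ℝ → ℝ → ℝ := fun h r => (g (r + h) - g r) / h with hDdef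
  set μ : Measure ℝ := volume.restrict (Ioc α β) with hμdef
  show g β - g α ≤ ∫ r in α..β, L r
  -- the approximating sequence of mesh sizes
  set c : ℕ → ℝ := fun n => h0 / (n + 1) with hcdef
  have hc_pos : ∀ n, 0 < c n := fun n => by positivity
  have hc_le : ∀ n, c n ≤ h0 := fun n => by
    rw [hcdef]
    exact div_le_self hh0.le (by exact_mod_cast Nat.one_le_iff_ne_zero.2 (Nat.succ_ne_zero n) : (1:ℝ) ≤ n + 1)
  have hc_tend : Tendsto c atTop (nhdsWithin 0 (Ioi 0)) := by
    rw [tendsto_nhdsWithin_iff]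
    constructor
    · have h1 : Tendsto (fun n : ℕ => h0 * (1 / (n + 1))) atTop (nhds (h0 * 0)) :=
        tendsto_one_div_add_atTop_nhds_zero_nat.const_mul h0
      simpa [hcdef, div_eq_mul_inv] using h1
    · exact Eventually.of_forall fun n => hc_pos n
  -- basic integrability facts
  have hsub : Ioc α β ⊆ Icc 0 T := fun x hx => ⟨hα.trans hx.1.le, hx.2.trans hβT⟩
  have hρμ : Integrable ρ μ := hρ.mono_set hsub
  have hDcont : ∀ h : ℝ, Continuous (D h) := fun h =>
    ((hgc.comp (continuous_id.add continuous_const)).sub hgc).div_const _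
  have hDint : ∀ n, Integrable (D (c n)) μ := fun n =>
    ((hDcont (c n)).integrableOn_Icc (a := α) (b := β)).mono_set Ioc_subset_Icc_self
  have hdomμ : ∀ᵐ r ∂μ, ∀ h : ℝ, 0 < h → h ≤ h0 → D h r ≤ ρ r :=
    ae_restrict_of_ae_restrict_of_subset hsub hdom
  have hLmeas : Measurable L := measurable_limsup_dq g hgc
  -- the integrals of the difference quotients converge to `g β - g α`
  have htendΦ : Tendsto (fun n => ∫ r, D (c n) r ∂μ) atTop (nhds (g β - g α)) := by
    set Fi : ℝ → ℝ := fun u => ∫ t in (0:ℝ)..u, g t with hFidef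
    have hFi : ∀ a b : ℝ, (∫ t in a..b, g t) = Fi b - Fi a := by
      intro a b
      have h := intervalIntegral.integral_add_adjacent_intervals
        (hgc.intervalIntegrable (μ := volume) 0 a) (hgc.intervalIntegrable (μ := volume) a b)
      simp only [hFidef]
      linarith
    have hΦ : ∀ n, ∫ r, D (c n) r ∂μ
        = (c n)⁻¹ * (Fi (β + c n) - Fi β) - (c n)⁻¹ * (Fi (α + c n) - Fi α) := by
      intro n
      have h1 : ∫ r, D (c n) r ∂μ = ∫ r in α..β, D (c n) r :=
        (intervalIntegral.integral_of_le hαβ).symm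
      have hI1 : IntervalIntegrable (fun x => g (x + c n)) volume α β :=
        (hgc.comp (continuous_id.add continuous_const)).intervalIntegrable α β
      have hI2 : IntervalIntegrable g volume α β := hgc.intervalIntegrable α β
      have e2 : (∫ x in α..β, (g (x + c n) - g x))
          = (∫ x in α..β, g (x + c n)) - ∫ x in α..β, g x :=
        intervalIntegral.integral_sub hI1 hI2
      have e3 : (∫ x in α..β, g (x + c n)) = ∫ x in (α + c n)..(β + c n), g x :=
        intervalIntegral.integral_comp_add_right (f := g) (c n)
      have e1 : (∫ r in α..β, D (c n) r)
          = (∫ x in α..β, (g (x + c n) - g x)) / c n := by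
        simp only [hDdef]
        rw [intervalIntegral.integral_div]
      rw [h1, e1, e2, e3, hFi, hFi]
      have hcn := (hc_pos n).ne'
      field_simp
      ring
    have hder : ∀ x : ℝ, HasDerivAt Fi (g x) x := fun x =>
      intervalIntegral.integral_hasDerivAt_right (hgc.intervalIntegrable _ _)
        (hgc.stronglyMeasurableAtFilter _ _) hgc.continuousAt
    have hβ' : Tendsto (fun n => (c n)⁻¹ * (Fi (β + c n) - Fi β)) atTop (nhds (g β)) := by
      have h2 := (hder β).tendsto_slope_zero_right.comp hc_tend
      simpa [smul_eq_mul, Function.comp_def] using h2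
    have hα' : Tendsto (fun n => (c n)⁻¹ * (Fi (α + c n) - Fi α)) atTop (nhds (g α)) := by
      have h2 := (hder α).tendsto_slope_zero_right.comp hc_tend
      simpa [smul_eq_mul, Function.comp_def] using h2
    exact Tendsto.congr (fun n => (hΦ n).symm) (hβ'.sub hα')
  set I : ℝ := ∫ r, ρ r ∂μ with hIdef
  have hle_I : ∀ n, ∫ r, D (c n) r ∂μ ≤ I := fun n =>
    integral_mono_ae (hDint n) hρμ (hdomμ.mono fun r hr => hr (c n) (hc_pos n) (hc_le n))
  have hAnn : g β - g α ≤ I := le_of_tendsto htendΦ (Eventually.of_forall hle_I)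
  -- reverse Fatou via `lintegral_liminf_le'`
  have hkey : ∫⁻ r, ENNReal.ofReal (ρ r - L r) ∂μ ≤ ENNReal.ofReal (I - (g β - g α)) := by
    have hfmeas : ∀ n, AEMeasurable (fun r => ENNReal.ofReal (ρ r - D (c n) r)) μ := fun n =>
      (hρμ.aemeasurable.sub (hDcont (c n)).measurable.aemeasurable).ennreal_ofReal
    have hfatou := lintegral_liminf_le' (u := atTop) hfmeas
    have hlin : ∀ n, ∫⁻ r, ENNReal.ofReal (ρ r - D (c n) r) ∂μ
        = ENNReal.ofReal (I - ∫ r, D (c n) r ∂μ) := by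
      intro n
      have hnn : 0 ≤ᵐ[μ] fun r => ρ r - D (c n) r :=
        hdomμ.mono fun r hr => sub_nonneg.2 (hr _ (hc_pos n) (hc_le n))
      have hint : Integrable (fun r => ρ r - D (c n) r) μ := hρμ.sub (hDint n)
      rw [← ofReal_integral_eq_lintegral_ofReal hint hnn]
      congr 1
      exact integral_sub hρμ (hDint n)
    have htlin : Tendsto (fun n => ∫⁻ r, ENNReal.ofReal (ρ r - D (c n) r) ∂μ) atTop
        (nhds (ENNReal.ofReal (I - (g β - g α)))) := by
      simp_rw [hlin]
      exact (ENNReal.continuous_ofReal.tendsto _).comp (tendsto_const_nhds.sub htendΦ)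
    have hliminf_eq := htlin.liminf_eq
    have hA : ∀ᵐ r ∂μ, ENNReal.ofReal (ρ r - L r)
        ≤ liminf (fun n => ENNReal.ofReal (ρ r - D (c n) r)) atTop := by
      filter_upwards [hdomμ] with r hr
      have hbdd : IsBoundedUnder (· ≤ ·) (nhdsWithin (0:ℝ) (Ioi 0))
          (fun h : ℝ => (g (r + h) - g r) / h) := by
        refine ⟨ρ r, ?_⟩
        rw [eventually_map]
        filter_upwards [Ioc_mem_nhdsGT hh0] with h hh
        have := hr h hh.1 hh.2
        simpa [hDdef] using this
      have key : ∀ b, L r < b →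
          ENNReal.ofReal (ρ r - b)
            ≤ liminf (fun n => ENNReal.ofReal (ρ r - D (c n) r)) atTop := by
        intro b hb
        have hb2 : limsup (fun h : ℝ => (g (r + h) - g r) / h) (nhdsWithin (0:ℝ) (Ioi 0)) < b := by
          simpa [hLdef] using hb
        have h1 : ∀ᶠ h in nhdsWithin (0:ℝ) (Ioi 0), (g (r + h) - g r) / h < b :=
          eventually_lt_of_limsup_lt hb2 hbdd
        have h2 : ∀ᶠ n in atTop, (g (r + c n) - g r) / c n < b := hc_tend.eventually h1
        refine le_liminf_of_le (by isBoundedDefault) (h2.mono fun n hn => ?_)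
        refine ENNReal.ofReal_le_ofReal ?_
        have hDn : D (c n) r = (g (r + c n) - g r) / c n := by rw [hDdef]
        rw [hDn]
        linarith
      have htb : Tendsto (fun k : ℕ => ENNReal.ofReal (ρ r - (L r + 1/(k+1)))) atTop
          (nhds (ENNReal.ofReal (ρ r - L r))) := by
        apply (ENNReal.continuous_ofReal.tendsto _).comp
        have h3 : Tendsto (fun k : ℕ => L r + 1/(k+1)) atTop (nhds (L r + 0)) :=
          tendsto_const_nhds.add tendsto_one_div_add_atTop_nhds_zero_nat
        have h4 := tendsto_const_nhds (x := ρ r) (f := atTop (α := ℕ)) |>.sub h3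
        simpa using h4
      exact le_of_tendsto htb (Eventually.of_forall fun k =>
        key _ (lt_add_of_pos_right _ (by positivity)))
    calc ∫⁻ r, ENNReal.ofReal (ρ r - L r) ∂μ
        ≤ ∫⁻ r, liminf (fun n => ENNReal.ofReal (ρ r - D (c n) r)) atTop ∂μ :=
          lintegral_mono_ae hA
      _ ≤ liminf (fun n => ∫⁻ r, ENNReal.ofReal (ρ r - D (c n) r) ∂μ) atTop := hfatou
      _ = ENNReal.ofReal (I - (g β - g α)) := hliminf_eq
  -- integrability of `L`
  have hLbound : ∀ᵐ r ∂μ, L r ≤ max (ρ r) 0 := by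
    filter_upwards [hdomμ] with r hr
    set A : Set ℝ :=
      {a : ℝ | ∀ᶠ h in nhdsWithin (0:ℝ) (Ioi 0), (g (r + h) - g r) / h ≤ a} with hAdef
    have hρA : ρ r ∈ A := by
      rw [hAdef]
      simp only [mem_setOf_eq]
      filter_upwards [Ioc_mem_nhdsGT hh0] with h hh
      have := hr h hh.1 hh.2
      simpa [hDdef] using this
    have hLr : L r = sInf A := by
      simp only [hLdef]
      rw [limsup_eq]
    by_cases hbb : BddBelow A
    · rw [hLr]
      exact le_max_of_le_left (csInf_le hbb hρA)
    · rw [hLr, Real.sInf_of_not_bddBelow hbb]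
      exact le_max_right _ _
  have hp_int : Integrable (fun r => max (ρ r - L r) 0) μ := by
    have hmeas : AEStronglyMeasurable (fun r => max (ρ r - L r) 0) μ :=
      ((hρμ.aemeasurable.sub hLmeas.aemeasurable).max aemeasurable_const).aestronglyMeasurable
    refine ⟨hmeas, ?_⟩
    have h0le : (0 : ℝ → ℝ) ≤ᵐ[μ] fun r => max (ρ r - L r) 0 :=
      Eventually.of_forall fun r => le_max_right _ _
    rw [hasFiniteIntegral_iff_ofReal h0le]
    have heq : ∀ r : ℝ, ENNReal.ofReal (max (ρ r - L r) 0) = ENNReal.ofReal (ρ r - L r) := by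
      intro r
      rcases le_total (ρ r - L r) 0 with h | h
      · rw [max_eq_right h, ENNReal.ofReal_zero, ENNReal.ofReal_of_nonpos h]
      · rw [max_eq_left h]
    simp_rw [heq]
    exact lt_of_le_of_lt hkey ENNReal.ofReal_lt_top
  have hL_int : Integrable L μ := by
    refine (hρμ.abs.add hp_int).mono' hLmeas.aestronglyMeasurable ?_
    filter_upwards [hLbound] with r hub
    have hlb : ρ r - max (ρ r - L r) 0 ≤ L r := by
      have h1 := le_max_left (ρ r - L r) 0
      linarith
    have h1 : L r ≤ |ρ r| := hub.trans (max_le (le_abs_self _) (abs_nonneg _))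
    have h2 : (0:ℝ) ≤ max (ρ r - L r) 0 := le_max_right _ _
    have h3 := neg_abs_le (ρ r)
    rw [Real.norm_eq_abs, abs_le]
    constructor <;> [skip; skip] <;> simp only [Pi.add_apply] <;> linarith
  -- conclusion
  have hfin : ∫⁻ r, ENNReal.ofReal (ρ r - L r) ∂μ ≠ ⊤ :=
    (lt_of_le_of_lt hkey ENNReal.ofReal_lt_top).ne
  have h5 : ∫ r, (ρ r - L r) ∂μ ≤ I - (g β - g α) := by
    have hsub_int : Integrable (fun r => ρ r - L r) μ := hρμ.sub hL_int
    rw [integral_eq_lintegral_pos_part_sub_lintegral_neg_part hsub_int]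
    have h6 : (∫⁻ r, ENNReal.ofReal (ρ r - L r) ∂μ).toReal ≤ I - (g β - g α) :=
      ENNReal.toReal_le_of_le_ofReal (by linarith) hkey
    have h7 : 0 ≤ (∫⁻ r, ENNReal.ofReal (-(ρ r - L r)) ∂μ).toReal := ENNReal.toReal_nonneg
    linarith
  have h8 : ∫ r, (ρ r - L r) ∂μ = I - ∫ r, L r ∂μ := integral_sub hρμ hL_int
  rw [intervalIntegral.integral_of_le hαβ]
  have : ∫ r in Ioc α β, L r = ∫ r, L r ∂μ := rfl
  linarith [h5, h8.symm.le]
end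

section
/- Let $g : [0,T] \to \mathbb{R}$ be continuous (extended constantly outside $[0,T]$) and suppose its right difference quotients $(g(t+h)-g(t))/h$ are dominated for $0 < h \le h_0$ by an integrable $\rho$. If moreover $\limsup_{h \to 0^+} \frac{g(t+h)-g(t)}{h} \le 0$ for a.e. $t \in [0,T]$, then $g$ is nonincreasing on $[0,T]$. -/
open Filter MeasureTheory Set
open scoped Topology

/-- If `g` is continuous on `[0,T]` (extended constantly outside), its right
difference quotients are dominated by an integrable `ρ`, and the upper right
Dini derivative is `≤ 0` a.e., then `g` is nonincreasing on `[0,T]`. -/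
theorem nonincreasing_of_dini_nonpos
    (T : ℝ) (hT : 0 < T) (g : ℝ → ℝ)
    (hg : ContinuousOn g (Icc 0 T))
    (hext_top : ∀ t : ℝ, T < t → g t = g T)
    (hext_bot : ∀ t : ℝ, t < 0 → g t = g 0)
    (ρ : ℝ → ℝ) (hρ : IntegrableOn ρ (Icc 0 T))
    (h0 : ℝ) (hh0 : 0 < h0)
    (hdom : ∀ᵐ t ∂(volume.restrict (Icc 0 T)),
      ∀ h : ℝ, 0 < h → h ≤ h0 → (g (t + h) - g t) / h ≤ ρ t)
    (hdini : ∀ᵐ t ∂(volume.restrict (Icc 0 T)),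
      Filter.limsup (fun h : ℝ => (g (t + h) - g t) / h) (nhdsWithin 0 (Ioi 0)) ≤ 0) :
    AntitoneOn g (Icc 0 T) := by
  -- `g` is continuous on all of `ℝ`
  have hrepr : ∀ t : ℝ, g t = g (max 0 (min t T)) := by
    intro t
    rcases lt_or_ge t 0 with h | h
    · rw [min_eq_left (h.le.trans hT.le), max_eq_left h.le, hext_bot t h]
    rcases le_or_gt t T with h' | h'
    · rw [min_eq_left h', max_eq_right h]
    · rw [min_eq_right h'.le, max_eq_right hT.le, hext_top t h']
  have hgc : Continuous g := by
    have hc : Continuous (g ∘ fun t : ℝ => max 0 (min t T)) :=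
      hg.comp_continuous (continuous_const.max (continuous_id.min continuous_const))
        (fun x => ⟨le_max_left _ _, max_le hT.le (min_le_right _ _)⟩)
    exact hc.congr fun t => (hrepr t).symm
  intro a ha b hb hab
  rcases eq_or_lt_of_le hab with rfl | hlt
  · exact le_rfl
  -- the sequence of step sizes
  set h : ℕ → ℝ := fun n => h0 / (n + 1) with hhdef
  have hpos : ∀ n, 0 < h n := fun n => div_pos hh0 (by positivity)
  have hle : ∀ n, h n ≤ h0 := by
    intro n
    rw [hhdef]
    rw [div_le_iff₀ (by positivity)]
    nlinarith [hh0.le, Nat.cast_nonneg (α := ℝ) n]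
  have htend0 : Tendsto h atTop (𝓝 0) := by
    have he : h = fun n : ℕ => h0 * (1 / ((n : ℝ) + 1)) := by
      funext n; rw [hhdef]; ring
    rw [he]
    simpa using (tendsto_const_nhds (x := h0)).mul tendsto_one_div_add_atTop_nhds_zero_nat
  have htend : Tendsto h atTop (𝓝[>] 0) :=
    tendsto_nhdsWithin_of_tendsto_nhds_of_eventually_within _ htend0
      (Eventually.of_forall fun n => hpos n)
  -- primitive of `g` and convergence of difference quotients of the primitive
  set F : ℝ → ℝ := fun x => ∫ t in (0:ℝ)..x, g t with hFdef
  have hFd : ∀ x : ℝ, HasDerivAt F (g x) x := fun x =>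
    intervalIntegral.integral_hasDerivAt_right (hgc.intervalIntegrable _ _)
      (hgc.stronglyMeasurableAtFilter _ _) hgc.continuousAt
  have hslope : ∀ x : ℝ,
      Tendsto (fun n => (F (x + h n) - F x) / h n) atTop (𝓝 (g x)) := by
    intro x
    have h1 := hasDerivAt_iff_tendsto_slope.mp (hFd x)
    have h2 : Tendsto (fun n => x + h n) atTop (𝓝[≠] x) := by
      apply tendsto_nhdsWithin_of_tendsto_nhds_of_eventually_within
      · simpa using tendsto_const_nhds.add htend0
      · exact Eventually.of_forall fun n => by
          simp only [mem_compl_iff, mem_singleton_iff]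
          have := hpos n; intro hc; nlinarith
    have h3 := h1.comp h2
    refine h3.congr fun n => ?_
    simp only [Function.comp_apply, slope_def_field, add_sub_cancel_left]
  -- the integral of the difference quotient
  have hInt : ∀ n, ∫ t in a..b, (g (t + h n) - g t) / h n =
      ((F (b + h n) - F b) - (F (a + h n) - F a)) / h n := by
    intro n
    have hi1 : IntervalIntegrable (fun t => g (t + h n)) volume a b :=
      (hgc.comp (continuous_id.add continuous_const)).intervalIntegrable _ _
    have hi2 : IntervalIntegrable g volume a b := hgc.intervalIntegrable _ _
    have e1 : (∫ t in a..b, g (t + h n)) = F (b + h n) - F (a + h n) := by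
      rw [intervalIntegral.integral_comp_add_right]
      exact (intervalIntegral.integral_interval_sub_left
        (hgc.intervalIntegrable _ _) (hgc.intervalIntegrable _ _)).symm
    have e2 : (∫ t in a..b, g t) = F b - F a :=
      (intervalIntegral.integral_interval_sub_left
        (hgc.intervalIntegrable _ _) (hgc.intervalIntegrable _ _)).symm
    rw [intervalIntegral.integral_div, intervalIntegral.integral_sub hi1 hi2, e1, e2]
    ring
  have hItend : Tendsto (fun n => ∫ t in a..b, (g (t + h n) - g t) / h n)
      atTop (𝓝 (g b - g a)) := by
    simp_rw [hInt]
    refine ((hslope b).sub (hslope a)).congr fun n => ?_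
    ring
  -- move to set integrals on `Ioc a b`
  have hsub : Ioc a b ⊆ Icc 0 T := fun t ht =>
    ⟨le_trans ha.1 (le_of_lt ht.1), le_trans ht.2 hb.2⟩
  have hdom' : ∀ᵐ t ∂(volume.restrict (Ioc a b)),
      ∀ hh : ℝ, 0 < hh → hh ≤ h0 → (g (t + hh) - g t) / hh ≤ ρ t :=
    ae_restrict_of_ae_restrict_of_subset hsub hdom
  have hdini' : ∀ᵐ t ∂(volume.restrict (Ioc a b)),
      Filter.limsup (fun hh : ℝ => (g (t + hh) - g t) / hh) (𝓝[>] 0) ≤ 0 :=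
    ae_restrict_of_ae_restrict_of_subset hsub hdini
  set ρ' : ℝ → ℝ := fun t => (ρ t ⊔ 0) + 1 with hρ'def
  have hρ1 : IntegrableOn ρ (Ioc a b) := hρ.mono_set hsub
  have hρ'int : IntegrableOn ρ' (Ioc a b) :=
    hρ1.pos_part.add (integrableOn_const measure_Ioc_lt_top.ne)
  have hρ'nonneg : ∀ t, 0 ≤ ρ' t := fun t => by
    have : (0:ℝ) ≤ ρ t ⊔ 0 := le_sup_right
    rw [hρ'def]; dsimp only; linarith
  have hρ'ge : ∀ t, ρ t ≤ ρ' t := fun t => by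
    have : ρ t ≤ ρ t ⊔ 0 := le_sup_left
    rw [hρ'def]; dsimp only; linarith
  set R : ℝ := ∫ t in Ioc a b, ρ' t with hRdef
  have hRpos : 0 < R := by
    have h1 : 0 ≤ ∫ t in Ioc a b, (ρ t ⊔ 0) := integral_nonneg fun t => le_sup_right
    have h2 : (∫ t in Ioc a b, (1:ℝ)) = b - a := by
      simp [Real.volume_Ioc, ENNReal.toReal_ofReal (sub_nonneg.2 hab), hab]
    have h3 : R = (∫ t in Ioc a b, (ρ t ⊔ 0)) + ∫ t in Ioc a b, (1:ℝ) := by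
      rw [hRdef, hρ'def, integral_add hρ1.pos_part
        (integrableOn_const measure_Ioc_lt_top.ne)]
    rw [h3, h2]; linarith
  -- integrability of the difference quotients
  have hfc : ∀ n, Continuous (fun t => (g (t + h n) - g t) / h n) := fun n =>
    ((hgc.comp (continuous_id.add continuous_const)).sub hgc).div_const _
  have hfint : ∀ n, IntegrableOn (fun t => (g (t + h n) - g t) / h n) (Ioc a b) :=
    fun n => (hfc n).integrableOn_Ioc
  -- domination
  have hdom'' : ∀ n, ∀ᵐ t ∂(volume.restrict (Ioc a b)),
      (g (t + h n) - g t) / h n ≤ ρ' t := fun n =>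
    hdom'.mono fun t ht => (ht (h n) (hpos n) (hle n)).trans (hρ'ge t)
  -- lintegral of the nonnegative functions
  have hlin : ∀ n, (∫⁻ t in Ioc a b, ENNReal.ofReal (ρ' t - (g (t + h n) - g t) / h n)) =
      ENNReal.ofReal (R - ∫ t in Ioc a b, (g (t + h n) - g t) / h n) := by
    intro n
    rw [← integral_sub hρ'int (hfint n)]
    exact (ofReal_integral_eq_lintegral_ofReal (hρ'int.sub (hfint n))
      ((hdom'' n).mono fun t ht => sub_nonneg.2 ht)).symm
  -- Fatou's lemma
  have hmeasn : ∀ n, AEMeasurable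
      (fun t => ENNReal.ofReal (ρ' t - (g (t + h n) - g t) / h n))
      (volume.restrict (Ioc a b)) := fun n =>
    ENNReal.measurable_ofReal.comp_aemeasurable
      ((hρ'int.aemeasurable).sub (hfc n).measurable.aemeasurable)
  -- pointwise lower bound for the liminf
  have hpoint : ∀ᵐ t ∂(volume.restrict (Ioc a b)),
      ENNReal.ofReal (ρ' t) ≤
        liminf (fun n => ENNReal.ofReal (ρ' t - (g (t + h n) - g t) / h n)) atTop := by
    filter_upwards [hdom', hdini'] with t ht1 ht2
    set q : ℝ → ℝ := fun hh => (g (t + hh) - g t) / hh with hqdef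
    have hbdd : IsBoundedUnder (· ≤ ·) (𝓝[>] (0:ℝ)) q := by
      refine isBoundedUnder_of_eventually_le (a := ρ t) ?_
      have h1 : ∀ᶠ hh in 𝓝[>] (0:ℝ), hh < h0 :=
        eventually_nhdsWithin_of_eventually_nhds (eventually_lt_nhds hh0)
      filter_upwards [h1, self_mem_nhdsWithin] with hh hlt hmem
      exact ht1 hh hmem hlt.le
    have hev : ∀ ε : ℝ, 0 < ε → ∀ᶠ n in atTop, q (h n) < ε := by
      intro ε hε
      exact htend.eventually (eventually_lt_of_limsup_lt (lt_of_le_of_lt ht2 hε) hbdd)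
    have hstep : ∀ ε : ℝ, 0 < ε → ENNReal.ofReal (ρ' t - ε) ≤
        liminf (fun n => ENNReal.ofReal (ρ' t - q (h n))) atTop := by
      intro ε hε
      apply le_liminf_of_le (by isBoundedDefault)
      filter_upwards [hev ε hε] with n hn
      exact ENNReal.ofReal_le_ofReal (by linarith)
    have htends : Tendsto (fun ε : ℝ => ENNReal.ofReal (ρ' t - ε)) (𝓝[>] 0)
        (𝓝 (ENNReal.ofReal (ρ' t))) := by
      have h1 : Tendsto (fun ε : ℝ => ρ' t - ε) (𝓝 0) (𝓝 (ρ' t)) := by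
        simpa using (tendsto_const_nhds (x := ρ' t)).sub (tendsto_id (x := 𝓝 (0:ℝ)))
      exact (ENNReal.continuous_ofReal.tendsto _).comp (h1.mono_left nhdsWithin_le_nhds)
    exact le_of_tendsto htends
      (eventually_nhdsWithin_of_forall fun ε hε => hstep ε hε)
  -- assemble the chain of inequalities
  set D : ℝ := g b - g a with hDdef
  have hIoceq : ∀ n, (∫ t in Ioc a b, (g (t + h n) - g t) / h n) =
      ∫ t in a..b, (g (t + h n) - g t) / h n := fun n =>
    (intervalIntegral.integral_of_le hab).symm
  have hlim2 : Tendsto (fun n => ENNReal.ofReal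
      (R - ∫ t in Ioc a b, (g (t + h n) - g t) / h n)) atTop
      (𝓝 (ENNReal.ofReal (R - D))) := by
    apply (ENNReal.continuous_ofReal.tendsto _).comp
    simp_rw [hIoceq]
    exact tendsto_const_nhds.sub hItend
  have key : ENNReal.ofReal R ≤ ENNReal.ofReal (R - D) := by
    calc ENNReal.ofReal R = ∫⁻ t in Ioc a b, ENNReal.ofReal (ρ' t) :=
          ofReal_integral_eq_lintegral_ofReal hρ'int
            (Eventually.of_forall fun t => hρ'nonneg t)
      _ ≤ ∫⁻ t in Ioc a b, liminf
            (fun n => ENNReal.ofReal (ρ' t - (g (t + h n) - g t) / h n)) atTop :=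
          lintegral_mono_ae hpoint
      _ ≤ liminf (fun n => ∫⁻ t in Ioc a b,
            ENNReal.ofReal (ρ' t - (g (t + h n) - g t) / h n)) atTop :=
          lintegral_liminf_le' hmeasn
      _ = liminf (fun n => ENNReal.ofReal
            (R - ∫ t in Ioc a b, (g (t + h n) - g t) / h n)) atTop := by
          simp_rw [hlin]
      _ = ENNReal.ofReal (R - D) := hlim2.liminf_eq
  have h1 : (0:ENNReal) < ENNReal.ofReal R := ENNReal.ofReal_pos.2 hRpos
  have h2 : (0:ℝ) < R - D := ENNReal.ofReal_pos.1 (lt_of_lt_of_le h1 key)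
  have h3 : R ≤ R - D := (ENNReal.ofReal_le_ofReal_iff h2.le).1 key
  have : D ≤ 0 := by linarith
  rw [hDdef] at this
  linarith
end

section
/- Deterministic comparison step of the verification theorem: let $T > 0$, let $v : [0,T]\times\mathbb{R}^n \to \mathbb{R}$ be continuous, let $x^* : [0,T] \to \mathbb{R}^n$ be continuous, and set $g(t) = v(t, x^*(t))$. Suppose $g$ is continuous on $[0,T]$, its right difference quotients are dominated: $(g(t+h)-g(t))/h \le \rho(t)$ for a.e. $t$ and $0 < h \le h_0$ with $\rho \in L^1$, and suppose $\limsup_{h\to 0^+}\frac{g(t+h)-g(t)}{h} \le -f(t)$ for a.e. $t \in [s,T]$, where $f \in L^1(s,T)$. Then $v(s, x^*(s)) \ge v(T, x^*(T)) + \int_s^T f(t)\,dt$. -/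
open Filter MeasureTheory Set

private lemma vcs_add_neg_part (x : ℝ) : x + max (-x) 0 = max x 0 := by
  rcases le_total x 0 with h | h
  · rw [max_eq_left (neg_nonneg.mpr h), max_eq_right h]; ring
  · rw [max_eq_right (neg_nonpos.mpr h), max_eq_left h]; ring

private lemma vcs_sub_neg_part (x : ℝ) : max x 0 - max (-x) 0 = x := by
  rcases le_total x 0 with h | h
  · rw [max_eq_left (neg_nonneg.mpr h), max_eq_right h]; ring
  · rw [max_eq_right (neg_nonpos.mpr h), max_eq_left h]; ring

/-- Deterministic comparison step of the verification theorem: if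
`g(t) = v(t, x*(t))` on `[0,T]` (extended constantly outside), the right
difference quotients of `g` are dominated by an integrable `ρ`, and the upper
right Dini derivative of `g` is `≤ -f(t)` a.e. on `[s,T]` with `f ∈ L¹(s,T)`,
then `v(s,x*(s)) ≥ v(T,x*(T)) + ∫_s^T f`. -/
theorem verification_comparison_step {n : ℕ} (T : ℝ) (hT : 0 < T)
    (v : ℝ → EuclideanSpace ℝ (Fin n) → ℝ)
    (hv : Continuous fun p : ℝ × EuclideanSpace ℝ (Fin n) => v p.1 p.2)
    (xstar : ℝ → EuclideanSpace ℝ (Fin n)) (hx : Continuous xstar)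
    (g : ℝ → ℝ)
    (hgdef : ∀ t ∈ Icc (0:ℝ) T, g t = v t (xstar t))
    (hext_top : ∀ t : ℝ, T < t → g t = g T)
    (hext_bot : ∀ t : ℝ, t < 0 → g t = g 0)
    (hgcont : ContinuousOn g (Icc 0 T))
    (ρ : ℝ → ℝ) (hρ : IntegrableOn ρ (Icc 0 T))
    (h0 : ℝ) (hh0 : 0 < h0)
    (hdom : ∀ᵐ t ∂(volume.restrict (Icc 0 T)),
      ∀ h : ℝ, 0 < h → h ≤ h0 → (g (t + h) - g t) / h ≤ ρ t)
    (s : ℝ) (hs : 0 ≤ s) (hsT : s ≤ T)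
    (f : ℝ → ℝ) (hf : IntegrableOn f (Icc s T))
    (hdini : ∀ᵐ t ∂(volume.restrict (Icc s T)),
      Filter.limsup (fun h : ℝ => (g (t + h) - g t) / h) (nhdsWithin 0 (Ioi 0)) ≤ -f t) :
    v T (xstar T) + ∫ t in s..T, f t ≤ v s (xstar s) := by
  -- g is globally continuous
  have hgeq : ∀ t : ℝ, g t = g (max 0 (min t T)) := by
    intro t
    rcases lt_trichotomy t 0 with h | h | h
    · rw [hext_bot t h, min_eq_left (le_of_lt (h.trans hT)), max_eq_left (le_of_lt h)]
    · simp [h, hT.le]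
    · rcases le_or_gt t T with h2 | h2
      · rw [min_eq_left h2, max_eq_right h.le]
      · rw [hext_top t h2, min_eq_right h2.le, max_eq_right hT.le]
  have hg : Continuous g := by
    have hclamp : Continuous fun t : ℝ => max 0 (min t T) :=
      continuous_const.max (continuous_id.min continuous_const)
    have : Continuous fun t : ℝ => g (max 0 (min t T)) :=
      hgcont.comp_continuous hclamp (fun t => ⟨le_max_left _ _,
        max_le hT.le (min_le_right _ _)⟩)
    exact continuous_congr (fun t => (hgeq t).symm) |>.mp this
  set μ := volume.restrict (Icc s T) with hμ
  set φ : ℝ → ℝ → ℝ := fun h t => (g (t + h) - g t) / h with hφ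
  set hn : ℕ → ℝ := fun k => h0 / (k + 1) with hhn
  have hn_pos : ∀ k, 0 < hn k := fun k => div_pos hh0 (by positivity)
  have hn_le : ∀ k, hn k ≤ h0 := by
    intro k
    rw [hhn]
    calc h0 / (k + 1 : ℝ) ≤ h0 / 1 := by
          apply div_le_div_of_nonneg_left hh0.le one_pos
          simp
      _ = h0 := div_one h0
  have hn_tendsto : Tendsto hn atTop (nhdsWithin 0 (Ioi 0)) := by
    apply tendsto_nhdsWithin_of_tendsto_nhds_of_eventually_within
    · have : Tendsto (fun k : ℕ => ((k:ℝ) + 1)⁻¹) atTop (nhds 0) := by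
        simpa [one_div] using tendsto_one_div_add_atTop_nhds_zero_nat (𝕜 := ℝ)
      have := this.const_mul h0
      simpa [hhn, div_eq_mul_inv] using this
    · exact Eventually.of_forall fun k => hn_pos k
  -- the sequence of averaged integrals
  set F : ℝ → ℝ := fun x => ∫ t in (0:ℝ)..x, g t with hF
  have hFd : ∀ b : ℝ, HasDerivAt F (g b) b := fun b =>
    (hg.integral_hasStrictDerivAt 0 b).hasDerivAt
  set a : ℕ → ℝ := fun k => ∫ t in Icc s T, φ (hn k) t with ha
  have hInt : ∀ h : ℝ, h ≠ 0 → Continuous (φ h) := by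
    intro h hne
    exact ((hg.comp (continuous_id.add continuous_const)).sub hg).div_const h
  have haF : ∀ k, a k = (F (T + hn k) - F T) / hn k - (F (s + hn k) - F s) / hn k := by
    intro k
    set h := hn k with hh
    have hpos := hn_pos k
    have hgl : IntervalIntegrable g volume s T := hg.intervalIntegrable s T
    have key : (∫ t in s..T, g (t + h)) = F (T + h) - F (s + h) := by
      rw [intervalIntegral.integral_comp_add_right g h]
      rw [← intervalIntegral.integral_interval_sub_left
        (hg.intervalIntegrable 0 (T + h)) (hg.intervalIntegrable 0 (s + h))]
    have key2 : (∫ t in s..T, g t) = F T - F s := by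
      rw [← intervalIntegral.integral_interval_sub_left
        (hg.intervalIntegrable 0 T) (hg.intervalIntegrable 0 s)]
    have : a k = ((∫ t in s..T, g (t + h)) - ∫ t in s..T, g t) / h := by
      rw [ha]
      simp only
      rw [MeasureTheory.integral_Icc_eq_integral_Ioc,
        ← intervalIntegral.integral_of_le hsT]
      have hcont1 : Continuous fun t : ℝ => g (t + h) := hg.comp (continuous_add_right h)
      rw [← intervalIntegral.integral_sub (hcont1.intervalIntegrable s T) hgl,
        ← intervalIntegral.integral_div]
    rw [this, key, key2]
    ring
  have ha_lim : Tendsto a atTop (nhds (g T - g s)) := by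
    have l1 : Tendsto (fun k => (F (T + hn k) - F T) / hn k) atTop (nhds (g T)) := by
      have := (hFd T).tendsto_slope_zero_right.comp hn_tendsto
      simpa [Function.comp_def, smul_eq_mul, div_eq_inv_mul] using this
    have l2 : Tendsto (fun k => (F (s + hn k) - F s) / hn k) atTop (nhds (g s)) := by
      have := (hFd s).tendsto_slope_zero_right.comp hn_tendsto
      simpa [Function.comp_def, smul_eq_mul, div_eq_inv_mul] using this
    have := l1.sub l2
    apply Tendsto.congr' _ this
    filter_upwards with k using (haF k).symm
  -- auxiliary functions
  set ρm : ℝ → ℝ := fun t => max (-ρ t) 0 with hρm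
  set fm : ℝ → ℝ := fun t => max (-f t) 0 with hfm
  set c : ℝ → ℝ := fun t => max (ρ t) 0 + max (f t) 0 with hc
  set η : ℕ → ℝ → ℝ := fun k t => ρ t - φ (hn k) t + ρm t + fm t with hη
  have hρμ : Integrable ρ μ := hρ.mono_set (Icc_subset_Icc hs le_rfl)
  have hfμ : Integrable f μ := hf
  have hφμ : ∀ k, Integrable (φ (hn k)) μ :=
    fun k => (hInt _ (hn_pos k).ne').integrableOn_Icc
  have hρmμ : Integrable ρm μ := hρμ.neg.pos_part
  have hfmμ : Integrable fm μ := hfμ.neg.pos_part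
  have hcμ : Integrable c μ := hρμ.pos_part.add hfμ.pos_part
  have hημ : ∀ k, Integrable (η k) μ :=
    fun k => ((hρμ.sub (hφμ k)).add hρmμ).add hfmμ
  have hdom' : ∀ᵐ t ∂μ, ∀ h : ℝ, 0 < h → h ≤ h0 → (g (t + h) - g t) / h ≤ ρ t :=
    ae_restrict_of_ae_restrict_of_subset (Icc_subset_Icc hs le_rfl) hdom
  have hae : ∀ᵐ t ∂μ, (∀ k, 0 ≤ η k t) ∧
      ENNReal.ofReal (c t) ≤ liminf (fun k => ENNReal.ofReal (η k t)) atTop := by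
    filter_upwards [hdom', hdini] with t h1 h2
    have hb : ∀ k, φ (hn k) t ≤ ρ t := fun k => h1 _ (hn_pos k) (hn_le k)
    have hρm0 : (0:ℝ) ≤ ρm t := le_max_right _ _
    have hfm0 : (0:ℝ) ≤ fm t := le_max_right _ _
    constructor
    · intro k
      have := hb k
      simp only [hη]
      linarith
    · have hbd : IsBoundedUnder (· ≤ ·) (nhdsWithin 0 (Ioi 0)) (fun h => φ h t) := by
        refine ⟨ρ t, eventually_map.mpr ?_⟩
        filter_upwards [Ioc_mem_nhdsGT hh0] with h hh
        exact h1 h hh.1 hh.2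
      have key : ∀ ε : ℝ, 0 < ε →
          ENNReal.ofReal (c t - ε) ≤ liminf (fun k => ENNReal.ofReal (η k t)) atTop := by
        intro ε hε
        have hev : ∀ᶠ h in nhdsWithin 0 (Ioi 0), φ h t < -f t + ε :=
          eventually_lt_of_limsup_lt (lt_of_le_of_lt h2 (by linarith)) hbd
        have hev2 : ∀ᶠ k in atTop, φ (hn k) t < -f t + ε := hn_tendsto.eventually hev
        refine le_liminf_of_le (by isBoundedDefault) ?_
        filter_upwards [hev2] with k hk
        apply ENNReal.ofReal_le_ofReal
        have e1 : ρ t + ρm t = max (ρ t) 0 := vcs_add_neg_part (ρ t)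
        have e2 : f t + fm t = max (f t) 0 := vcs_add_neg_part (f t)
        simp only [hη, hc]
        linarith
      have htend : Tendsto (fun m : ℕ => ENNReal.ofReal (c t - 1/(m+1))) atTop
          (nhds (ENNReal.ofReal (c t))) := by
        apply (ENNReal.continuous_ofReal.tendsto _).comp
        have h5 : Tendsto (fun m : ℕ => c t - 1/(m+1)) atTop (nhds (c t - 0)) :=
          tendsto_const_nhds.sub tendsto_one_div_add_atTop_nhds_zero_nat
        simpa using h5
      exact le_of_tendsto htend (Eventually.of_forall fun m => key _ (by positivity))
  have hae1 : ∀ᵐ t ∂μ, ∀ k, 0 ≤ η k t := hae.mono fun t h => h.1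
  have hae2 : ∀ᵐ t ∂μ,
      ENNReal.ofReal (c t) ≤ liminf (fun k => ENNReal.ofReal (η k t)) atTop :=
    hae.mono fun t h => h.2
  set B : ℝ := (∫ t, ρ t ∂μ) + (∫ t, ρm t ∂μ) + ∫ t, fm t ∂μ with hB
  have hηint : ∀ k, ∫ t, η k t ∂μ = B - a k := by
    intro k
    simp only [hη]
    have i1 : Integrable (fun t => ρ t - φ (hn k) t) μ := hρμ.sub (hφμ k)
    have i2 : Integrable (fun t => ρ t - φ (hn k) t + ρm t) μ := i1.add hρmμ
    rw [integral_add i2 hfmμ, integral_add i1 hρmμ, integral_sub hρμ (hφμ k)]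
    have : a k = ∫ t, φ (hn k) t ∂μ := rfl
    rw [this, hB]
    ring
  have hBnonneg : 0 ≤ B - (g T - g s) := by
    have h1 : ∀ k, 0 ≤ B - a k := by
      intro k
      rw [← hηint k]
      exact integral_nonneg_of_ae (hae1.mono fun t h => h k)
    exact ge_of_tendsto' (tendsto_const_nhds.sub ha_lim) h1
  have hfatou : ENNReal.ofReal (∫ t, c t ∂μ) ≤ ENNReal.ofReal (B - (g T - g s)) := by
    have e1 : ENNReal.ofReal (∫ t, c t ∂μ) = ∫⁻ t, ENNReal.ofReal (c t) ∂μ :=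
      ofReal_integral_eq_lintegral_ofReal hcμ (Eventually.of_forall fun t => by positivity)
    have e2 : ∀ k, ENNReal.ofReal (∫ t, η k t ∂μ) = ∫⁻ t, ENNReal.ofReal (η k t) ∂μ :=
      fun k => ofReal_integral_eq_lintegral_ofReal (hημ k) (hae1.mono fun t h => h k)
    have e3 : (∫⁻ t, ENNReal.ofReal (c t) ∂μ) ≤
        ∫⁻ t, liminf (fun k => ENNReal.ofReal (η k t)) atTop ∂μ := lintegral_mono_ae hae2
    have e4 : (∫⁻ t, liminf (fun k => ENNReal.ofReal (η k t)) atTop ∂μ) ≤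
        liminf (fun k => ∫⁻ t, ENNReal.ofReal (η k t) ∂μ) atTop :=
      lintegral_liminf_le' (fun k => ENNReal.measurable_ofReal.comp_aemeasurable
        (hημ k).aestronglyMeasurable.aemeasurable)
    have e5 : Tendsto (fun k => ENNReal.ofReal (∫ t, η k t ∂μ)) atTop
        (nhds (ENNReal.ofReal (B - (g T - g s)))) := by
      apply (ENNReal.continuous_ofReal.tendsto _).comp
      have h6 : Tendsto (fun k => B - a k) atTop (nhds (B - (g T - g s))) :=
        tendsto_const_nhds.sub ha_lim
      exact h6.congr fun k => (hηint k).symm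
    have e6 : liminf (fun k => ∫⁻ t, ENNReal.ofReal (η k t) ∂μ) atTop =
        ENNReal.ofReal (B - (g T - g s)) := by
      rw [← e5.liminf_eq]
      exact liminf_congr (Eventually.of_forall fun k => (e2 k).symm)
    calc ENNReal.ofReal (∫ t, c t ∂μ) = _ := e1
      _ ≤ _ := e3
      _ ≤ _ := e4
      _ = _ := e6
  have hmain : ∫ t, c t ∂μ ≤ B - (g T - g s) :=
    (ENNReal.ofReal_le_ofReal_iff hBnonneg).mp hfatou
  have hsplit_c : ∫ t, c t ∂μ = (∫ t, max (ρ t) 0 ∂μ) + ∫ t, max (f t) 0 ∂μ := by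
    simp only [hc]
    exact integral_add hρμ.pos_part hfμ.pos_part
  have hρ_id : ∫ t, max (ρ t) 0 ∂μ = (∫ t, ρ t ∂μ) + ∫ t, ρm t ∂μ := by
    rw [← integral_add hρμ hρmμ]
    exact integral_congr_ae (Eventually.of_forall fun t => (vcs_add_neg_part (ρ t)).symm)
  have hf_id : ∫ t, f t ∂μ = (∫ t, max (f t) 0 ∂μ) - ∫ t, fm t ∂μ := by
    rw [← integral_sub hfμ.pos_part hfmμ]
    exact integral_congr_ae (Eventually.of_forall fun t => (vcs_sub_neg_part (f t)).symm)
  have hfinal : g T - g s ≤ -∫ t, f t ∂μ := by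
    rw [hB] at hmain
    rw [hsplit_c, hρ_id] at hmain
    linarith [hf_id]
  have hint_eq : (∫ t in s..T, f t) = ∫ t, f t ∂μ := by
    rw [intervalIntegral.integral_of_le hsT, hμ, ← MeasureTheory.integral_Icc_eq_integral_Ioc]
  have hgs : g s = v s (xstar s) := hgdef s ⟨hs, hsT⟩
  have hgT : g T = v T (xstar T) := hgdef T ⟨hT.le, le_rfl⟩
  rw [hint_eq, ← hgs, ← hgT]
  linarith
end
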